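/- Let d ≥ 2 and let B1 = [[b11, b12·d],[b12·d, b22·d]] and B2 = [[c11, c12·d],[c12·d, c22·d]] be primitive symmetric integer matrices. If B2 = Tᵗ·B1·T for some T = [[t11,t12],[t21,t22]] ∈ GL₂(ℤ), then t12 ≡ 0 (mod d). -/

import Mathlib

open Matrix
/-- Let `d ≥ 2` and let `B1 = [[b11,b12·d],[b12·d,b22·d]]` and
`B2 = [[c11,c12·d],[c12·d,c22·d]]` be primitive symmetric integer matrices.
If `B2 = Tᵗ·B1·T` for some `T ∈ GL₂(ℤ)`, then `d ∣ t12`. -/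
theorem stmt2 (d b11 b12 b22 c11 c12 c22 : ℤ) (hd : 2 ≤ d)
    (hB1prim : Int.gcd b11 (Int.gcd (b12 * d) (b22 * d)) = 1)
    (hB2prim : Int.gcd c11 (Int.gcd (c12 * d) (c22 * d)) = 1)
    (T : Matrix (Fin 2) (Fin 2) ℤ)
    (hT : T.det = 1 ∨ T.det = -1)
    (hconj : !![c11, c12 * d; c12 * d, c22 * d] =
      Tᵀ * !![b11, b12 * d; b12 * d, b22 * d] * T) :
    d ∣ T 0 1 := by
  set a := T 0 0 with ha
  set b := T 0 1 with hb
  set c := T 1 0 with hc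
  set e := T 1 1 with he
  have hdet : a * e - b * c = 1 ∨ a * e - b * c = -1 := by
    rw [Matrix.det_fin_two] at hT; exact hT
  have h01 := congrFun (congrFun hconj 0) 1
  have h11 := congrFun (congrFun hconj 1) 1
  simp [Matrix.mul_apply, Fin.sum_univ_two, Matrix.transpose_apply, ← ha, ← hb, ← hc, ← he] at h01 h11
  -- coprimality of d and b11
  have hcop : IsCoprime d b11 := by
    rw [Int.isCoprime_iff_gcd_eq_one]
    have h1 : (Int.gcd d b11 : ℤ) ∣ b11 := Int.gcd_dvd_right _ _
    have h2 : (Int.gcd d b11 : ℤ) ∣ Int.gcd (b12 * d) (b22 * d) :=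
      Int.dvd_coe_gcd (Dvd.dvd.mul_left (Int.gcd_dvd_left _ _) b12)
        (Dvd.dvd.mul_left (Int.gcd_dvd_left _ _) b22)
    have h3 : (Int.gcd d b11 : ℤ) ∣ (Int.gcd b11 (Int.gcd (b12 * d) (b22 * d)) : ℤ) :=
      Int.dvd_coe_gcd h1 h2
    rw [hB1prim] at h3
    exact_mod_cast Int.eq_one_of_dvd_one (by positivity) h3
  have hA : d ∣ b11 * (b * b) :=
    ⟨c22 - 2 * b12 * b * e - b22 * e * e, by linear_combination -h11⟩
  have hbb : d ∣ b * b := hcop.dvd_of_dvd_mul_left hA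
  have hab : d ∣ a * b := hcop.dvd_of_dvd_mul_left
    ⟨c12 - b12 * (a * e + c * b) - b22 * c * e, by linear_combination -h01⟩
  have hcopa : IsCoprime d a := by
    rw [Int.isCoprime_iff_gcd_eq_one]
    by_contra hne
    obtain ⟨p, hp, hpd⟩ := Nat.exists_prime_and_dvd hne
    have hpz : Prime (p : ℤ) := Nat.prime_iff_prime_int.mp hp
    have hpdd : (p : ℤ) ∣ d := dvd_trans (Int.natCast_dvd_natCast.mpr hpd) (Int.gcd_dvd_left _ _)
    have hpa : (p : ℤ) ∣ a := dvd_trans (Int.natCast_dvd_natCast.mpr hpd) (Int.gcd_dvd_right _ _)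
    have hpb : (p : ℤ) ∣ b := hpz.dvd_of_dvd_pow (n := 2) (by
      have h := hpdd.trans hbb; rwa [← sq] at h)
    have hu : (p : ℤ) ∣ 1 := by
      rcases hdet with h | h
      · rw [← h]; exact dvd_sub (hpa.mul_right e) (hpb.mul_right c)
      · have : (p : ℤ) ∣ -1 := by
          rw [← h]; exact dvd_sub (hpa.mul_right e) (hpb.mul_right c)
        exact (dvd_neg.mp this)
    have := Int.eq_one_of_dvd_one (by positivity) hu
    have : p = 1 := by exact_mod_cast this
    exact hp.one_lt.ne' this
  exact hcopa.dvd_of_dvd_mul_left hab
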